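/- Let B be a finite set and let m, j, k ∈ B with m ≠ j and m ≠ k (j = k is allowed). Let W = (ℝ³)^B be the real vector space of maps from B to ℝ³, and define S : W → W by S(f)(ℓ) = f(ℓ) for ℓ ≠ m and S(f)(m) = f(j) + f(k) − f(m). Then S is an ℝ-linear involution of W of determinant −1; it maps the diagonal subspace Δ of constant maps to itself, restricting to the identity on Δ; and the induced linear involution of the quotient space W/Δ also has determinant −1 (it is orientation-reversing). -/

import Mathlib

open Matrix

noncomputable def konL (I : Type*) [Fintype I] (u v : I → ℝ) :
    (I → Fin 3 → ℝ) →ₗ[ℝ] (I → Fin 3 → ℝ) where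
  toFun f := fun b => f b + u b • (∑ c, v c • f c)
  map_add' f g := by
    funext b
    simp [smul_add, Finset.sum_add_distrib, add_add_add_comm]
  map_smul' r f := by
    funext b
    simp [Finset.smul_sum, smul_comm r, smul_add]

lemma konL_apply (I : Type*) [Fintype I] (u v : I → ℝ) (f : I → Fin 3 → ℝ) (b : I) :
    konL I u v f b = f b + u b • (∑ c, v c • f c) := rfl

lemma konL_det (I : Type*) [Fintype I] [DecidableEq I] (u v : I → ℝ) :
    LinearMap.det (konL I u v) = (1 + ∑ c, v c * u c) ^ 3 := by
  classical
  set bb := Pi.basis (fun _ : I => Pi.basisFun ℝ (Fin 3)) with hbb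
  rw [← LinearMap.det_toMatrix bb]
  have hM : LinearMap.toMatrix bb bb (konL I u v) =
      1 + (Matrix.of fun (p : Σ _ : I, Fin 3) (s : Fin 3) => u p.1 * (if p.2 = s then 1 else 0)) *
        (Matrix.of fun (s : Fin 3) (q : Σ _ : I, Fin 3) => v q.1 * (if s = q.2 then 1 else 0)) := by
    ext ⟨b, i⟩ ⟨c, t⟩
    rw [LinearMap.toMatrix_apply]
    simp only [hbb, Pi.basis_repr, Pi.basis_apply]
    have hsum : ∑ c', v c' • Pi.single (M := fun _ : I => Fin 3 → ℝ) c (Pi.single t (1:ℝ)) c' =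
        v c • Pi.single (M := fun _ : Fin 3 => ℝ) t (1:ℝ) := by
      rw [Finset.sum_eq_single c]
      · simp
      · intro b' _ hb'; simp [Pi.single_eq_of_ne hb']
      · simp
    simp only [konL, LinearMap.coe_mk, AddHom.coe_mk, Pi.basisFun_apply, hsum,
      Matrix.add_apply, Matrix.mul_apply, Matrix.one_apply, Matrix.of_apply,
      Pi.add_apply, Pi.smul_apply, Pi.single_apply, smul_eq_mul, Sigma.mk.inj_iff]
    rw [Finset.sum_eq_single i]
    · split_ifs <;> simp_all
    · intro s _ hs; simp [if_neg (Ne.symm hs)]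
    · simp
  rw [hM, Matrix.det_one_add_mul_comm]
  have h2 : (Matrix.of fun (s : Fin 3) (q : Σ _ : I, Fin 3) => v q.1 * (if s = q.2 then 1 else 0)) *
      (Matrix.of fun (p : Σ _ : I, Fin 3) (s : Fin 3) => u p.1 * (if p.2 = s then 1 else 0)) =
      (∑ c, v c * u c) • 1 := by
    ext s t
    simp only [Matrix.mul_apply, Matrix.of_apply, Matrix.smul_apply, Matrix.one_apply,
      smul_eq_mul]
    rw [← Finset.univ_sigma_univ, Finset.sum_sigma]
    rw [Finset.sum_mul]
    refine Finset.sum_congr rfl fun a _ => ?_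
    rw [Finset.sum_eq_single t]
    · split_ifs <;> simp_all
    · intro i _ hi; simp [if_neg hi]
    · simp
  rw [h2]
  have : (1 : Matrix (Fin 3) (Fin 3) ℝ) + (∑ c, v c * u c) • 1 = (1 + ∑ c, v c * u c) • 1 := by
    rw [add_smul, one_smul]
  rw [this, Matrix.det_smul, Matrix.det_one, mul_one]
  simp

/-- Kontsevich's symmetry: for a finite set `B` and `m, j, k ∈ B` with `m ≠ j`, `m ≠ k`,
the map `S` on `W = (ℝ³)^B` defined by `S(f)(ℓ) = f(ℓ)` for `ℓ ≠ m` and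
`S(f)(m) = f(j) + f(k) − f(m)` is an `ℝ`-linear involution of determinant `−1`; it
preserves the diagonal subspace `Δ` of constant maps, restricting to the identity on it,
and the induced involution of `W/Δ` also has determinant `−1`. -/
theorem kontsevich_symmetry_det_neg_one
    (B : Type*) [Fintype B] [DecidableEq B] (m j k : B) (hmj : m ≠ j) (hmk : m ≠ k) :
    ∃ S : (B → (Fin 3 → ℝ)) →ₗ[ℝ] (B → (Fin 3 → ℝ)),
      (∀ (f : B → (Fin 3 → ℝ)) (ℓ : B), ℓ ≠ m → S f ℓ = f ℓ) ∧
      (∀ f : B → (Fin 3 → ℝ), S f m = f j + f k - f m) ∧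
      S ∘ₗ S = LinearMap.id ∧
      LinearMap.det S = -1 ∧
      (∀ f : B → (Fin 3 → ℝ), (∀ a b : B, f a = f b) → S f = f) ∧
      ∀ (Δ : Submodule ℝ (B → (Fin 3 → ℝ))),
        Δ = LinearMap.range (LinearMap.pi fun _ : B => (LinearMap.id : (Fin 3 → ℝ) →ₗ[ℝ] (Fin 3 → ℝ))) →
        ∃ hΔ : Δ ≤ Δ.comap S,
          (Submodule.mapQ Δ Δ S hΔ) ∘ₗ (Submodule.mapQ Δ Δ S hΔ) = LinearMap.id ∧
          LinearMap.det (Submodule.mapQ Δ Δ S hΔ) = -1 := by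
  classical
  set u : B → ℝ := fun b => if b = m then 1 else 0 with hu
  set v : B → ℝ := fun c =>
    (if c = j then 1 else 0) + (if c = k then 1 else 0) - 2 * (if c = m then 1 else 0) with hv
  set S := konL B u v with hS
  have hsum : ∀ f : B → Fin 3 → ℝ, ∑ c, v c • f c = f j + f k - 2 • f m := by
    intro f
    have : ∀ c, v c • f c = (if c = j then (1:ℝ) else 0) • f c +
        (if c = k then (1:ℝ) else 0) • f c - (2 * if c = m then (1:ℝ) else 0) • f c := by
      intro c; rw [hv]; simp [sub_smul, add_smul]
    simp only [this, Finset.sum_sub_distrib, Finset.sum_add_distrib]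
    congr 1
    · congr 1
      · rw [Finset.sum_eq_single_of_mem j (Finset.mem_univ _)]
        · simp
        · intro b _ hb; simp [if_neg hb]
      · rw [Finset.sum_eq_single_of_mem k (Finset.mem_univ _)]
        · simp
        · intro b _ hb; simp [if_neg hb]
    · rw [Finset.sum_eq_single_of_mem m (Finset.mem_univ _)]
      · simp [two_smul, two_mul, add_smul]
      · intro b _ hb; simp [if_neg hb]
  have h1 : ∀ (f : B → Fin 3 → ℝ) (ℓ : B), ℓ ≠ m → S f ℓ = f ℓ := by
    intro f ℓ hℓ
    rw [hS, konL_apply, hu]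
    simp [if_neg hℓ]
  have h2 : ∀ f : B → Fin 3 → ℝ, S f m = f j + f k - f m := by
    intro f
    rw [hS, konL_apply, hsum, hu]
    simp [two_smul]
    abel
  have hSS : ∀ f : B → Fin 3 → ℝ, S (S f) = f := by
    intro f
    funext b
    by_cases hb : b = m
    · subst hb
      rw [h2, h2, h1 _ j (Ne.symm hmj), h1 _ k (Ne.symm hmk)]
      abel
    · rw [h1 _ _ hb, h1 _ _ hb]
  have hconst : ∀ f : B → Fin 3 → ℝ, (∀ a b : B, f a = f b) → S f = f := by
    intro f hf
    funext b
    by_cases hb : b = m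
    · rw [hb, h2, hf j m, hf k m]
      abel
    · exact h1 _ _ hb
  refine ⟨S, h1, h2, ?_, ?_, hconst, ?_⟩
  · exact LinearMap.ext hSS
  · rw [hS, konL_det]
    have : ∑ c, v c * u c = -2 := by
      rw [Finset.sum_eq_single_of_mem m (Finset.mem_univ _)]
      · rw [hv, hu]; simp [if_neg hmj, if_neg hmk]
      · intro b _ hb; rw [hu]; simp [if_neg hb]
    rw [this]; norm_num
  · intro Δ hΔeq
    have hmemΔ : ∀ f : B → Fin 3 → ℝ, f ∈ Δ ↔ ∃ x : Fin 3 → ℝ, ∀ b, f b = x := by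
      intro f
      rw [hΔeq]
      constructor
      · rintro ⟨x, rfl⟩; exact ⟨x, fun b => rfl⟩
      · rintro ⟨x, hx⟩; exact ⟨x, funext fun b => (hx b).symm⟩
    have hΔ : Δ ≤ Δ.comap S := by
      intro f hf
      rcases (hmemΔ f).mp hf with ⟨x, hx⟩
      have : S f = f := hconst f (fun a b => by rw [hx a, hx b])
      simpa [Submodule.mem_comap, this] using hf
    refine ⟨hΔ, ?_, ?_⟩
    · apply LinearMap.ext
      intro x
      obtain ⟨f, rfl⟩ := Submodule.Quotient.mk_surjective Δ x
      rw [LinearMap.comp_apply, Submodule.mapQ_apply, Submodule.mapQ_apply, hSS,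
        LinearMap.id_apply]
    · -- determinant of the induced map on the quotient
      set I' := {b : B // b ≠ m}
      set q : (B → Fin 3 → ℝ) →ₗ[ℝ] (I' → Fin 3 → ℝ) :=
        { toFun := fun f b => f b.1 - f m
          map_add' := fun f g => by funext b; simp; abel
          map_smul' := fun r f => by funext b; simp [smul_sub] } with hq
      set ext0 : (I' → Fin 3 → ℝ) →ₗ[ℝ] (B → Fin 3 → ℝ) :=
        { toFun := fun g b => if h : b = m then 0 else g ⟨b, h⟩
          map_add' := fun f g => by funext b; by_cases h : b = m <;> simp [h]
          map_smul' := fun r f => by funext b; by_cases h : b = m <;> simp [h] } with hext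
      have hker : Δ ≤ LinearMap.ker q := by
        intro f hf
        rcases (hmemΔ f).mp hf with ⟨x, hx⟩
        simp only [LinearMap.mem_ker, hq]
        funext b
        simp [hx, LinearMap.coe_mk, AddHom.coe_mk]
      have hqe : ∀ g, q (ext0 g) = g := by
        intro g
        funext b
        simp only [hq, hext, LinearMap.coe_mk, AddHom.coe_mk]
        rw [dif_neg b.2]
        simp
      set fwd : ((B → Fin 3 → ℝ) ⧸ Δ) →ₗ[ℝ] (I' → Fin 3 → ℝ) := Submodule.liftQ Δ q hker
      set bwd : (I' → Fin 3 → ℝ) →ₗ[ℝ] ((B → Fin 3 → ℝ) ⧸ Δ) := Δ.mkQ ∘ₗ ext0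
      have hfb : fwd ∘ₗ bwd = LinearMap.id := by
        apply LinearMap.ext
        intro g
        simp only [LinearMap.comp_apply, LinearMap.id_apply]
        rw [show bwd g = Δ.mkQ (ext0 g) from rfl, show fwd (Δ.mkQ (ext0 g)) = q (ext0 g) from
          Submodule.liftQ_apply Δ q (ext0 g), hqe]
      have hbf : bwd ∘ₗ fwd = LinearMap.id := by
        apply LinearMap.ext
        intro x
        obtain ⟨f, rfl⟩ := Submodule.Quotient.mk_surjective Δ x
        simp only [LinearMap.comp_apply, LinearMap.id_apply]
        rw [show (Submodule.Quotient.mk f : _ ⧸ Δ) = Δ.mkQ f from rfl]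
        rw [show fwd (Δ.mkQ f) = q f from Submodule.liftQ_apply Δ q f]
        rw [show bwd (q f) = Δ.mkQ (ext0 (q f)) from rfl]
        rw [Submodule.mkQ_apply, Submodule.mkQ_apply, Submodule.Quotient.eq]
        refine (hmemΔ _).mpr ⟨-f m, fun b => ?_⟩
        by_cases hb : b = m
        · subst hb
          simp only [Pi.sub_apply, hext, hq, LinearMap.coe_mk, AddHom.coe_mk, dif_pos rfl]
          abel
        · simp only [Pi.sub_apply, hext, hq, LinearMap.coe_mk, AddHom.coe_mk, dif_neg hb]
          abel
      set e : ((B → Fin 3 → ℝ) ⧸ Δ) ≃ₗ[ℝ] (I' → Fin 3 → ℝ) :=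
        LinearEquiv.ofLinear fwd bwd hfb hbf with he
      set T := Submodule.mapQ Δ Δ S hΔ with hT
      set v' : I' → ℝ := fun c => -((if c.1 = j then (1:ℝ) else 0) + (if c.1 = k then 1 else 0))
        with hv'
      have hconj : (e : ((B → Fin 3 → ℝ) ⧸ Δ) →ₗ[ℝ] (I' → Fin 3 → ℝ)) ∘ₗ T ∘ₗ
          (e.symm : (I' → Fin 3 → ℝ) →ₗ[ℝ] ((B → Fin 3 → ℝ) ⧸ Δ)) =
          konL I' (fun _ => 1) v' := by
        apply LinearMap.ext
        intro g
        have hesymm : e.symm g = Δ.mkQ (ext0 g) := rfl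
        have heapp : ∀ h, e (Δ.mkQ h) = q h := fun h => Submodule.liftQ_apply Δ q h
        simp only [LinearMap.comp_apply, LinearEquiv.coe_coe, hesymm]
        rw [hT, Submodule.mkQ_apply, Submodule.mapQ_apply, ← Submodule.mkQ_apply, heapp]
        have hvsum : ∑ c : I', v' c • g c = -(g ⟨j, Ne.symm hmj⟩ + g ⟨k, Ne.symm hmk⟩) := by
          have : ∀ c : I', v' c • g c =
              -((if c = (⟨j, Ne.symm hmj⟩ : I') then (1:ℝ) else 0) • g c +
                (if c = (⟨k, Ne.symm hmk⟩ : I') then (1:ℝ) else 0) • g c) := by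
            intro c
            simp only [hv']
            have e1 : (if c.1 = j then (1:ℝ) else 0) =
                (if c = (⟨j, Ne.symm hmj⟩ : I') then (1:ℝ) else 0) := by
              by_cases h : c = (⟨j, Ne.symm hmj⟩ : I')
              · simp [h]
              · rw [if_neg h, if_neg (fun hh => h (Subtype.ext hh))]
            have e2 : (if c.1 = k then (1:ℝ) else 0) =
                (if c = (⟨k, Ne.symm hmk⟩ : I') then (1:ℝ) else 0) := by
              by_cases h : c = (⟨k, Ne.symm hmk⟩ : I')
              · simp [h]
              · rw [if_neg h, if_neg (fun hh => h (Subtype.ext hh))]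
            rw [e1, e2, neg_smul, add_smul]
          simp only [this, Finset.sum_neg_distrib, Finset.sum_add_distrib]
          congr 1
          congr 1
          · rw [Finset.sum_eq_single_of_mem (⟨j, Ne.symm hmj⟩ : I') (Finset.mem_univ _)]
            · simp
            · intro b _ hb; simp [if_neg hb]
          · rw [Finset.sum_eq_single_of_mem (⟨k, Ne.symm hmk⟩ : I') (Finset.mem_univ _)]
            · simp
            · intro b _ hb; simp [if_neg hb]
        funext b
        rw [konL_apply, hvsum]
        have hqb : ∀ h : B → Fin 3 → ℝ, q h b = h b.1 - h m := fun h => rfl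
        rw [hqb, h1 _ _ b.2, h2]
        have hx0 : ext0 g m = 0 := by
          simp only [hext, LinearMap.coe_mk, AddHom.coe_mk]
          simp
        have hxb : ext0 g b.1 = g b := by
          simp only [hext, LinearMap.coe_mk, AddHom.coe_mk, dif_neg b.2]
          rfl
        have hxj : ext0 g j = g ⟨j, Ne.symm hmj⟩ := by
          simp only [hext, LinearMap.coe_mk, AddHom.coe_mk, dif_neg (Ne.symm hmj)]
        have hxk : ext0 g k = g ⟨k, Ne.symm hmk⟩ := by
          simp only [hext, LinearMap.coe_mk, AddHom.coe_mk, dif_neg (Ne.symm hmk)]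
        rw [hx0, hxb, hxj, hxk]
        simp only [one_smul]
        abel
      have := LinearMap.det_conj T e
      rw [← this, hconj, konL_det]
      have hsum' : ∑ c : I', v' c * 1 = -2 := by
        have : ∀ c : I', v' c * 1 =
            -((if c = (⟨j, Ne.symm hmj⟩ : I') then (1:ℝ) else 0) +
              (if c = (⟨k, Ne.symm hmk⟩ : I') then (1:ℝ) else 0)) := by
          intro c
          simp only [hv']
          rw [mul_one]
          have e1 : (if c.1 = j then (1:ℝ) else 0) =
              (if c = (⟨j, Ne.symm hmj⟩ : I') then (1:ℝ) else 0) := by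
            by_cases h : c = (⟨j, Ne.symm hmj⟩ : I')
            · simp [h]
            · rw [if_neg h, if_neg (fun hh => h (Subtype.ext hh))]
          have e2 : (if c.1 = k then (1:ℝ) else 0) =
              (if c = (⟨k, Ne.symm hmk⟩ : I') then (1:ℝ) else 0) := by
            by_cases h : c = (⟨k, Ne.symm hmk⟩ : I')
            · simp [h]
            · rw [if_neg h, if_neg (fun hh => h (Subtype.ext hh))]
          rw [e1, e2]
        simp only [this, Finset.sum_neg_distrib, Finset.sum_add_distrib]
        rw [Finset.sum_eq_single_of_mem (⟨j, Ne.symm hmj⟩ : I') (Finset.mem_univ _)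
            (fun b _ hb => by simp [if_neg hb]),
          Finset.sum_eq_single_of_mem (⟨k, Ne.symm hmk⟩ : I') (Finset.mem_univ _)
            (fun b _ hb => by simp [if_neg hb])]
        norm_num
      rw [hsum']
      norm_num
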